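/- Let P be a joint probability mass function over finite discrete variables A, B, C, D, X. For fixed values a, b, x: P(b,x,a,c,d) - P(b,c,d) + 1 ≥ P(b,x,a) + P(a) - P(a,b), for any fixed c,d. That is, the natural upper bound dominates the PAG-based upper bound in Example 1. -/
import Mathlib


/-- the natural upper bound dominates the PAG-based upper bound
in Example 1: `P(b,x,a,c,d) - P(b,c,d) + 1 ≥ P(b,x,a) + P(a) - P(a,b)`. -/
theorem natural_dominates_pag_upper {A B X C D : Type*}
    [Fintype A] [Fintype B] [Fintype X] [Fintype C] [Fintype D]
    (P : A × B × X × C × D → ℝ) (hpos : ∀ v, 0 ≤ P v) (hsum : ∑ v, P v = 1)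
    (a : A) (b : B) (x : X) (c : C) (d : D) :
    P (a, b, x, c, d) - (∑ a', ∑ x', P (a', b, x', c, d)) + 1 ≥
      (∑ c', ∑ d', P (a, b, x, c', d'))
        + (∑ b', ∑ x', ∑ c', ∑ d', P (a, b', x', c', d'))
        - (∑ x', ∑ c', ∑ d', P (a, b, x', c', d')) := by
  classical
  set g : A → X → ℝ := fun a' x' =>
    (∑ c', ∑ d', P (a', b, x', c', d')) - P (a', b, x', c, d) with hgdef
  have hg0 : ∀ a' x', 0 ≤ g a' x' := by
    intro a' x'
    have h1 : P (a', b, x', c, d) ≤ ∑ d', P (a', b, x', c, d') :=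
      Finset.single_le_sum (f := fun d' => P (a', b, x', c, d'))
        (fun i _ => hpos _) (Finset.mem_univ d)
    have h2 : (∑ d', P (a', b, x', c, d')) ≤ ∑ c', ∑ d', P (a', b, x', c', d') :=
      Finset.single_le_sum (f := fun c' => ∑ d', P (a', b, x', c', d'))
        (fun i _ => Finset.sum_nonneg fun j _ => hpos _) (Finset.mem_univ c)
    simp only [hgdef]
    linarith
  have hI : g a x ≤ ∑ a', ∑ x', g a' x' := by
    have h1 : g a x ≤ ∑ x', g a x' :=
      Finset.single_le_sum (f := fun x' => g a x') (fun i _ => hg0 a i) (Finset.mem_univ x)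
    have h2 : (∑ x', g a x') ≤ ∑ a', ∑ x', g a' x' :=
      Finset.single_le_sum (f := fun a' => ∑ x', g a' x')
        (fun i _ => Finset.sum_nonneg fun j _ => hg0 i j) (Finset.mem_univ a)
    linarith
  have hI' : (∑ c', ∑ d', P (a, b, x, c', d')) - P (a, b, x, c, d) ≤
      (∑ a', ∑ x', ∑ c', ∑ d', P (a', b, x', c', d'))
        - ∑ a', ∑ x', P (a', b, x', c, d) := by
    simpa [hgdef, Finset.sum_sub_distrib] using hI
  -- inclusion-exclusion bound
  set h : A → B → ℝ := fun a' b' => ∑ x', ∑ c', ∑ d', P (a', b', x', c', d') with hhdef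
  have hh0 : ∀ a' b', 0 ≤ h a' b' := fun a' b' =>
    Finset.sum_nonneg fun _ _ => Finset.sum_nonneg fun _ _ =>
      Finset.sum_nonneg fun _ _ => hpos _
  have hsum' : (∑ a', ∑ b', h a' b') = 1 := by
    rw [← hsum]
    simp only [hhdef, Fintype.sum_prod_type]
  have e1 : (∑ a', h a' b) = h a b + ∑ a' ∈ Finset.univ.erase a, h a' b :=
    (Finset.add_sum_erase _ _ (Finset.mem_univ a)).symm
  have e2 : (∑ a', ∑ b', h a' b') =
      (∑ b', h a b') + ∑ a' ∈ Finset.univ.erase a, ∑ b', h a' b' :=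
    (Finset.add_sum_erase _ _ (Finset.mem_univ a)).symm
  have e3 : (∑ a' ∈ Finset.univ.erase a, h a' b) ≤
      ∑ a' ∈ Finset.univ.erase a, ∑ b', h a' b' :=
    Finset.sum_le_sum fun i _ =>
      Finset.single_le_sum (f := fun b' => h i b') (fun j _ => hh0 i j) (Finset.mem_univ b)
  have hII : (∑ a', h a' b) + (∑ b', h a b') - h a b ≤ 1 := by
    rw [← hsum']
    linarith
  have hU : (∑ a', h a' b) = ∑ a', ∑ x', ∑ c', ∑ d', P (a', b, x', c', d') := rfl
  have hF : (∑ b', h a b') = ∑ b', ∑ x', ∑ c', ∑ d', P (a, b', x', c', d') := rfl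
  have hab : h a b = ∑ x', ∑ c', ∑ d', P (a, b, x', c', d') := rfl
  rw [hU, hF, hab] at hII
  linarith
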